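/- Let a ≥ 0, Δt > 0, s = 1/(1+Δt²a), and λ = s + iΔt s√a an eigenvalue of the implicit LinOSS matrix. Then for every n ≥ 1, |λ|^n = s^{n/2} = (1 + Δt² a)^{−n/2} > 0; in particular powers of the eigenvalue modulus decay at most polynomially in exp: |λ|^n ≥ (1+Δt²a)^{−n/2}, and if Δt² a ≤ c/n then |λ|^n ≥ e^{−c/2}. -/

import Mathlib

/-- for `a ≥ 0`, `Δt > 0`, `s = 1/(1+Δt²a)`, `λ = s + iΔts√a`, and
`n ≥ 1`: `|λ|ⁿ = s^{n/2} = (1+Δt²a)^{−n/2} > 0`; and if `Δt²a ≤ c/n` then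
`|λ|ⁿ ≥ e^{−c/2}`. -/
theorem stmt17 (a Δt s c : ℝ) (ha : 0 ≤ a) (hΔt : 0 < Δt) (hc : 0 ≤ c)
    (hs : s = 1 / (1 + Δt ^ 2 * a))
    (lam : ℂ) (hlam : lam = (s : ℂ) + Complex.I * Δt * s * Real.sqrt a) :
    ∀ n : ℕ, 1 ≤ n →
      (‖lam‖ ^ n = s ^ ((n : ℝ) / 2)
      ∧ ‖lam‖ ^ n = (1 + Δt ^ 2 * a) ^ (-(n : ℝ) / 2)
      ∧ 0 < ‖lam‖ ^ n
      ∧ (Δt ^ 2 * a ≤ c / n → Real.exp (-c / 2) ≤ ‖lam‖ ^ n)) := by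
  intro n hn
  set D : ℝ := 1 + Δt ^ 2 * a with hD
  have hDpos : 0 < D := by positivity
  have hD1 : 1 ≤ D := by nlinarith [sq_nonneg Δt]
  have hspos : 0 < s := by rw [hs]; positivity
  have hsD : s * D = 1 := by
    rw [hs]; field_simp
  -- |lam|^2 = s
  have habs2 : (‖lam‖) ^ 2 = s := by
    rw [Complex.sq_norm, hlam]
    simp [Complex.normSq_apply, Complex.add_re, Complex.add_im, Complex.mul_re,
      Complex.mul_im, Complex.I_re, Complex.I_im]
    ring_nf
    rw [Real.sq_sqrt ha]
    have h2D : s ^ 2 * (1 + Δt ^ 2 * a) = s := by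
      rw [pow_two, mul_assoc, ← hD, hsD, mul_one]
    linear_combination h2D
  have habs : ‖lam‖ = Real.sqrt s := by
    rw [← habs2, Real.sqrt_sq (norm_nonneg lam)]
  have h1 : ‖lam‖ ^ n = s ^ ((n : ℝ) / 2) := by
    rw [habs, Real.sqrt_eq_rpow, ← Real.rpow_natCast (s ^ ((1:ℝ)/2)) n,
      ← Real.rpow_mul hspos.le]
    ring_nf
  have hsd : s = D ^ (-1 : ℝ) := by
    rw [Real.rpow_neg_one, hs]
    field_simp
  have h2 : ‖lam‖ ^ n = D ^ (-(n : ℝ) / 2) := by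
    rw [h1, hsd, ← Real.rpow_mul hDpos.le]
    norm_num [neg_div]
  have h3 : 0 < ‖lam‖ ^ n := by
    rw [h1]; exact Real.rpow_pos_of_pos hspos _
  refine ⟨h1, h2, h3, ?_⟩
  intro hle
  rw [h2, Real.rpow_def_of_pos hDpos, Real.exp_le_exp]
  have hlog : Real.log D ≤ Δt ^ 2 * a := by
    have := Real.log_le_sub_one_of_pos hDpos
    simpa [hD] using this
  have hnpos : (0:ℝ) < n := by exact_mod_cast hn
  have hlognn : 0 ≤ Real.log D := Real.log_nonneg hD1
  have hnc : Real.log D * n ≤ c := (le_div_iff₀ hnpos).mp (hlog.trans hle)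
  nlinarith
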